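/- Let H be a nonnegative self-adjoint operator on a Hilbert space and f a bounded positive continuous function on [0,∞). If λ ≥ 0 does not belong to σ(H) (and λ > 0, or λ = 0), and {ψₙ} is a sequence in the domain of H with ‖ψₙ‖ = 1, then it cannot hold simultaneously that ⟨f(H)(H−λ)ψₙ, (H−λ)ψₙ⟩ → 0 and ⟨ψₙ, (H−λ)ψₙ⟩ → 0. Hence the existence of such a sequence implies λ ∈ σ(H). -/

import Mathlib

open Filter Topology

/-- Generalized Weyl criterion (sufficiency, contrapositive form): if a
nonnegative real number `λ` does not belong to `σ(H)` for a nonnegative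
self-adjoint operator `H`, and `f` is a bounded positive continuous function
on `[0,∞)`, then no sequence of unit vectors `ψₙ` can satisfy both
`⟨f(H)(H−λ)ψₙ, (H−λ)ψₙ⟩ → 0` and `⟨ψₙ, (H−λ)ψₙ⟩ → 0`. -/
theorem generalized_weyl_sufficiency
    {ℋ : Type*} [NormedAddCommGroup ℋ] [InnerProductSpace ℂ ℋ] [CompleteSpace ℋ]
    (H : ℋ →L[ℂ] ℋ) (hH : IsSelfAdjoint H) (hHpos : H.IsPositive)
    (f : ℝ → ℝ) (hf_cont : Continuous f)
    (hf_pos : ∀ x : ℝ, 0 ≤ x → 0 < f x)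
    (hf_bdd : ∃ C : ℝ, ∀ x : ℝ, 0 ≤ x → f x ≤ C)
    (lam : ℝ) (hlam_nonneg : 0 ≤ lam) (hlam : (lam : ℂ) ∉ spectrum ℂ H)
    (ψ : ℕ → ℋ) (hψ : ∀ n, ‖ψ n‖ = 1) :
    ¬ (Tendsto (fun n =>
          (inner ℂ ((cfc f H) ((H - (lam : ℂ) • 1) (ψ n)))
            ((H - (lam : ℂ) • 1) (ψ n)) : ℂ)) atTop (nhds 0) ∧
       Tendsto (fun n => (inner ℂ (ψ n) ((H - (lam : ℂ) • 1) (ψ n)) : ℂ))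
         atTop (nhds 0)) := by
  rintro ⟨h1, -⟩
  haveI : Nontrivial ℋ := nontrivial_of_ne (ψ 0) 0 (by
    intro h; simpa [h] using hψ 0)
  -- the spectrum of H is contained in [0, ‖H‖]
  have hspec : spectrum ℝ H ⊆ Set.Icc 0 ‖H‖ := by
    intro x hx
    refine ⟨spectrum_nonneg_of_nonneg
      ((ContinuousLinearMap.nonneg_iff_isPositive H).mpr hHpos) hx, ?_⟩
    exact (abs_le.mp (by exact_mod_cast spectrum.norm_le_norm_of_mem hx)).2
  -- f has a positive minimum δ on [0, ‖H‖]
  obtain ⟨x₀, hx₀, hmin⟩ := isCompact_Icc.exists_isMinOn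
    (Set.nonempty_Icc.mpr (norm_nonneg H)) hf_cont.continuousOn
  set δ : ℝ := f x₀ with hδ
  have hδpos : 0 < δ := hf_pos x₀ hx₀.1
  -- cfc f H ≥ δ • 1 in the Loewner order
  have hle : algebraMap ℝ (ℋ →L[ℂ] ℋ) δ ≤ cfc f H := by
    have h0 : (0 : ℋ →L[ℂ] ℋ) ≤ cfc (fun x => f x - δ) H :=
      cfc_nonneg fun x hx => sub_nonneg.mpr (hmin (hspec hx))
    have hsub := cfc_sub f (fun _ => δ) H (hf_cont.continuousOn) (continuousOn_const)
    rw [show (fun x => f x - δ) = (fun x => f x - (fun _ : ℝ => δ) x) from rfl,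
      hsub, cfc_const δ H hH] at h0
    exact sub_nonneg.mp h0
  have hP : (cfc f H - algebraMap ℝ (ℋ →L[ℂ] ℋ) δ).IsPositive :=
    (ContinuousLinearMap.nonneg_iff_isPositive _).mp (sub_nonneg.mpr hle)
  -- lower bound on the inner product
  have hlower : ∀ x : ℋ, δ * ‖x‖ ^ 2 ≤ Complex.re (inner ℂ ((cfc f H) x) x : ℂ) := by
    intro x
    have h := hP.inner_nonneg_left x
    simp only [ContinuousLinearMap.sub_apply, inner_sub_left, map_sub,
      RCLike.re_to_complex] at h
    have hre : Complex.re (inner ℂ ((algebraMap ℝ (ℋ →L[ℂ] ℋ) δ) x) x : ℂ)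
        = δ * ‖x‖ ^ 2 := by
      rw [Algebra.algebraMap_eq_smul_one, ContinuousLinearMap.smul_apply,
        ContinuousLinearMap.one_apply,
        RCLike.real_smul_eq_coe_smul (K := ℂ), inner_smul_left]
      simp [inner_self_eq_norm_sq_to_K, ← Complex.ofReal_pow]
    have h := (Complex.nonneg_iff.mp h).1
    rw [Complex.sub_re, hre] at h
    linarith
  -- H - lam is invertible, hence bounded below
  have hunit : IsUnit (algebraMap ℂ (ℋ →L[ℂ] ℋ) lam - H) := spectrum.notMem_iff.mp hlam
  obtain ⟨u, hu⟩ := hunit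
  set B : ℋ →L[ℂ] ℋ := -(↑u⁻¹ : ℋ →L[ℂ] ℋ) with hB
  set T : ℋ →L[ℂ] ℋ := H - (lam : ℂ) • 1 with hT
  have hBT : B * T = 1 := by
    have hTeq : T = -(algebraMap ℂ (ℋ →L[ℂ] ℋ) lam - H) := by
      rw [hT, Algebra.algebraMap_eq_smul_one, neg_sub]
    rw [hB, hTeq, ← hu, neg_mul_neg, Units.inv_mul]
  have hBpos : 0 < ‖B‖ := by
    rw [norm_pos_iff]
    intro h
    have : (1 : ℋ →L[ℂ] ℋ) = 0 := by rw [← hBT, h, zero_mul]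
    exact one_ne_zero this
  have hTlow : ∀ n, 1 / ‖B‖ ≤ ‖T (ψ n)‖ := by
    intro n
    have happ : B (T (ψ n)) = ψ n := by
      have := congrArg (fun (S : ℋ →L[ℂ] ℋ) => S (ψ n)) hBT
      simpa [ContinuousLinearMap.mul_apply] using this
    have : (1 : ℝ) ≤ ‖B‖ * ‖T (ψ n)‖ := by
      calc (1 : ℝ) = ‖ψ n‖ := (hψ n).symm
        _ = ‖B (T (ψ n))‖ := by rw [happ]
        _ ≤ ‖B‖ * ‖T (ψ n)‖ := B.le_opNorm _
    rw [div_le_iff₀ hBpos]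
    linarith [mul_comm ‖B‖ ‖T (ψ n)‖]
  -- hence terms are bounded below by a positive constant
  set c : ℝ := δ * (1 / ‖B‖) ^ 2 with hc
  have hcpos : 0 < c := by positivity
  have hbound : ∀ n, c ≤ Complex.re (inner ℂ ((cfc f H) (T (ψ n))) (T (ψ n)) : ℂ) := by
    intro n
    refine le_trans ?_ (hlower (T (ψ n)))
    have h1n : 1 / ‖B‖ ≤ ‖T (ψ n)‖ := hTlow n
    have h0 : 0 ≤ 1 / ‖B‖ := by positivity
    have : (1 / ‖B‖) ^ 2 ≤ ‖T (ψ n)‖ ^ 2 := by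
      apply pow_le_pow_left₀ h0 h1n
    nlinarith
  -- but the real parts tend to 0
  have hre0 : Tendsto (fun n =>
      Complex.re (inner ℂ ((cfc f H) (T (ψ n))) (T (ψ n)) : ℂ)) atTop (nhds 0) := by
    have := (Complex.continuous_re.tendsto 0).comp h1
    simpa [Function.comp_def, hT] using this
  have : c ≤ 0 := ge_of_tendsto' hre0 fun n => hbound n
  linarith
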